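/- Let $k$ be a field of prime characteristic $p$, and let $H_m$ be the $T$-space of $k_0\langle X\rangle$ generated by $x_1^p\cdots x_m^p$. Then for every $m \geq 1$, every $u \in H_m$, and every $v \in k_0\langle X\rangle$, the commutator $[u,v]$ belongs to $H_m$. -/

import Mathlib

open scoped BigOperators

/-- The free non-unital associative algebra over `k` on countably many variables,
realized as the semigroup algebra of the free semigroup on `ℕ`. -/
abbrev FA (k : Type*) [Field k] := MonoidAlgebra k (FreeSemigroup ℕ)

/-- The generator (variable) `x_i`. -/
noncomputable def Xg (k : Type*) [Field k] (i : ℕ) : FA k :=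
  MonoidAlgebra.single (FreeSemigroup.of i) 1

/-- Product of a (nonempty) list in a non-unital semiring; `0` on the empty list. -/
def lprod {A : Type*} [NonUnitalSemiring A] : List A → A
  | [] => 0
  | [a] => a
  | a :: b :: l => a * lprod (b :: l)

/-- `n`-th power in a non-unital semiring (zero for `n = 0`). -/
def npow' {A : Type*} [NonUnitalSemiring A] (a : A) (n : ℕ) : A :=
  lprod (List.replicate n a)

/-- The full multilinear symmetrization `S^{(d)}(y_1,…,y_d) = ∑_{σ ∈ Σ_d} y_{σ(1)} ⋯ y_{σ(d)}`. -/
def Ssym {A : Type*} [NonUnitalSemiring A] (d : ℕ) (y : Fin d → A) : A :=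
  ∑ σ : Equiv.Perm (Fin d), lprod (List.ofFn (fun i => y (σ i)))

/-- A T-space: a subspace closed under all substitution endomorphisms
(non-unital algebra endomorphisms). -/
def IsTSpace (k : Type*) [Field k] (V : Submodule k (FA k)) : Prop :=
  ∀ (φ : FA k →ₙₐ[k] FA k), ∀ v ∈ V, φ v ∈ V

/-- The T-space generated by a set `S`: the span of all substitution instances
of elements of `S`. -/
noncomputable def TSpan (k : Type*) [Field k] (S : Set (FA k)) : Submodule k (FA k) :=
  Submodule.span k {a | ∃ (φ : FA k →ₙₐ[k] FA k) (s : FA k), s ∈ S ∧ a = φ s}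

/-- The set of products `u * v` with `u ∈ U`, `v ∈ V`. -/
def mulSet {k : Type*} [Field k] (U V : Submodule k (FA k)) : Set (FA k) :=
  {a | ∃ u ∈ U, ∃ v ∈ V, a = u * v}

/-- The T-spaces `S_n^{(d)}`: `S_1^{(d)}` is generated by `S^{(d)}(x_1,…,x_d)` and
`S_{n+1}^{(d)} = (S_n^{(d)} S_1^{(d)})^S`. -/
noncomputable def Sn (k : Type*) [Field k] (d : ℕ) : ℕ → Submodule k (FA k)
  | 0 => ⊥
  | 1 => TSpan k {Ssym d (fun i => Xg k i)}
  | (n+2) => TSpan k (mulSet (Sn k d (n+1)) (Sn k d 1))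

/-- The T-spaces `H_n`: `H_1` is generated by `x_1^p` and `H_{n+1} = (H_n H_1)^S`. -/
noncomputable def Hn (k : Type*) [Field k] (p : ℕ) : ℕ → Submodule k (FA k)
  | 0 => ⊥
  | 1 => TSpan k {npow' (Xg k 0) p}
  | (n+2) => TSpan k (mulSet (Hn k p (n+1)) (Hn k p 1))

/-- The word `x_1^p x_2^p ⋯ x_n^p`. -/
noncomputable def hword (k : Type*) [Field k] (p n : ℕ) : FA k :=
  lprod ((List.range n).map (fun t => npow' (Xg k t) p))

section Lemmas
variable {A B : Type*} [NonUnitalSemiring A] [NonUnitalSemiring B]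

theorem lprod_cons (a : A) (l : List A) (h : l ≠ []) : lprod (a :: l) = a * lprod l := by
  cases l with
  | nil => simp at h
  | cons b l => rfl

theorem map_lprod {F : Type*} [FunLike F A B] [MulHomClass F A B] [AddMonoidHomClass F A B]
    (φ : F) (l : List A) : φ (lprod l) = lprod (l.map φ) := by
  induction l with
  | nil => simpa [lprod] using map_zero φ
  | cons a l ih =>
    cases l with
    | nil => simp [lprod]
    | cons b l' =>
      have h1 : lprod ((a :: b :: l').map φ) = φ a * lprod ((b :: l').map φ) := by
        rw [List.map_cons]
        exact lprod_cons _ _ (by simp)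
      rw [lprod_cons a (b :: l') (by simp), map_mul, ih, h1]

theorem map_npow' {F : Type*} [FunLike F A B] [MulHomClass F A B] [AddMonoidHomClass F A B]
    (φ : F) (a : A) (n : ℕ) : φ (npow' a n) = npow' (φ a) n := by
  rw [npow', map_lprod, List.map_replicate, npow']

end Lemmas

section Unital
variable {R : Type*} [Ring R]

theorem prod_expand (n : ℕ) (x y : R) :
    (x + y) ^ n = ∑ f : Fin n → Bool, (List.ofFn fun i => cond (f i) y x).prod := by
  induction n with
  | zero => simp
  | succ n ih =>
    rw [pow_succ', ih]
    rw [← Equiv.sum_comp (Fin.consEquiv (fun _ : Fin (n+1) => Bool))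
      (fun f => (List.ofFn fun i => cond (f i) y x).prod)]
    rw [Fintype.sum_prod_type, Fintype.sum_bool]
    have key : ∀ (b : Bool) (g : Fin n → Bool),
        (List.ofFn fun i => cond ((Fin.consEquiv (fun _ : Fin (n+1) => Bool)) (b, g) i) y x).prod
        = cond b y x * (List.ofFn fun i => cond (g i) y x).prod := by
      intro b g
      rw [List.ofFn_succ, List.prod_cons]
      simp [Fin.consEquiv]
    simp only [key, Bool.cond_true, Bool.cond_false]
    rw [← Finset.mul_sum, ← Finset.mul_sum, add_mul, add_comm]

variable {k : Type*} [CommSemiring k] [Module k R] [SMulCommClass k R R] [IsScalarTower k R R]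

theorem prod_cond_smul (n : ℕ) (f : Fin n → Bool) (c : k) (x y : R) :
    (List.ofFn fun i => cond (f i) (c • y) x).prod
      = (∏ i, if f i = true then c else 1) • (List.ofFn fun i => cond (f i) y x).prod := by
  induction n with
  | zero => simp
  | succ n ih =>
    rw [List.ofFn_succ, List.prod_cons, ih (fun i => f i.succ), Fin.prod_univ_succ,
      List.ofFn_succ, List.prod_cons]
    cases hf0 : f 0 <;>
      simp [hf0, smul_mul_assoc, mul_smul_comm, smul_smul, mul_comm]

theorem telescope (n : ℕ) (a v : R) :
    ∑ i : Fin n, (List.ofFn fun j => if j = i then a * v - v * a else a).prod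
      = a ^ n * v - v * a ^ n := by
  induction n with
  | zero => simp
  | succ n ih =>
    rw [Fin.sum_univ_succ]
    have h0 : (List.ofFn fun j : Fin (n+1) => if j = 0 then a * v - v * a else a).prod
        = (a * v - v * a) * a ^ n := by
      rw [List.ofFn_succ, List.prod_cons, if_pos rfl]
      congr 1
      simp [Fin.succ_ne_zero]
    have hs : ∀ i : Fin n,
        (List.ofFn fun j : Fin (n+1) => if j = i.succ then a * v - v * a else a).prod
        = a * (List.ofFn fun j : Fin n => if j = i then a * v - v * a else a).prod := by
      intro i
      rw [List.ofFn_succ, List.prod_cons, if_neg (Fin.succ_ne_zero i).symm]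
      simp only [Fin.succ_inj]
    simp only [h0, hs]
    rw [← Finset.mul_sum, ih, sub_mul, mul_sub, mul_assoc v a (a^n), ← mul_assoc a (a^n) v,
      ← mul_assoc a v (a^n), ← pow_succ']
    abel

end Unital

section Transfer
variable {k : Type*} [Field k]

noncomputable abbrev ιFA (k : Type*) [Field k] : FA k →ₙₐ[k] Unitization k (FA k) :=
  Unitization.inrNonUnitalAlgHom k (FA k)

theorem ι_lprod (l : List (FA k)) (h : l ≠ []) :
    ιFA k (lprod l) = (l.map (ιFA k)).prod := by
  induction l with
  | nil => simp at h
  | cons a l ih =>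
    cases l with
    | nil => simp [lprod]
    | cons b l' =>
      rw [lprod_cons a _ (by simp), map_mul, ih (by simp)]
      simp

theorem ι_npow' (a : FA k) (n : ℕ) (h : 1 ≤ n) :
    ιFA k (npow' a n) = (ιFA k a) ^ n := by
  rw [npow', ι_lprod _ (by simp; omega), List.map_replicate, List.prod_replicate]

theorem ι_lprod_ofFn {n : ℕ} (h : 1 ≤ n) (g : Fin n → FA k) :
    ιFA k (lprod (List.ofFn g)) = (List.ofFn fun i => ιFA k (g i)).prod := by
  rw [ι_lprod _ (by simp [List.ofFn_eq_nil_iff]; omega), List.map_ofFn]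
  rfl

theorem npow'_expand {p : ℕ} (hp1 : 1 ≤ p) (x y : FA k) :
    npow' (x + y) p = ∑ f : Fin p → Bool, lprod (List.ofFn fun i => cond (f i) y x) := by
  apply Unitization.inr_injective (R := k)
  show ιFA k _ = ιFA k _
  rw [ι_npow' _ _ hp1, map_add, map_sum, prod_expand]
  refine Finset.sum_congr rfl fun f _ => ?_
  rw [ι_lprod_ofFn hp1]
  exact congrArg List.prod (congrArg List.ofFn (funext fun i => by cases f i <;> rfl))

theorem lprod_cond_smul {A : Type*} [NonUnitalSemiring A] {K : Type*} [CommSemiring K]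
    [Module K A] [SMulCommClass K A A] [IsScalarTower K A A] :
    ∀ (n : ℕ) (f : Fin n → Bool) (c : K) (x y : A), 1 ≤ n →
    lprod (List.ofFn fun i => cond (f i) (c • y) x)
      = (∏ i, if f i = true then c else 1) • lprod (List.ofFn fun i => cond (f i) y x)
  | 1, f, c, x, y, _ => by
    simp only [List.ofFn_succ, List.ofFn_zero, Fin.prod_univ_one]
    cases hf0 : f 0 <;> simp [hf0, lprod]
  | (m+2), f, c, x, y, _ => by
    have ih := lprod_cond_smul (m+1) (fun i => f i.succ) c x y (by omega)
    rw [List.ofFn_succ (f := fun i => cond (f i) (c • y) x),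
      List.ofFn_succ (f := fun i => cond (f i) y x),
      lprod_cons _ _ (by simp [List.ofFn_eq_nil_iff]),
      lprod_cons _ _ (by simp [List.ofFn_eq_nil_iff]), ih,
      Fin.prod_univ_succ (f := fun i => if f i = true then c else 1)]
    cases hf0 : f 0 <;> simp [hf0, smul_mul_assoc, mul_smul_comm, smul_smul, mul_comm]

theorem lprod_smul_expand {p : ℕ} (hp1 : 1 ≤ p) (f : Fin p → Bool) (c : k) (a w : FA k) :
    lprod (List.ofFn fun i => cond (f i) (c • w) a)
      = (c ^ (Finset.univ.filter fun i => f i = true).card) •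
        lprod (List.ofFn fun i => cond (f i) w a) := by
  rw [lprod_cond_smul p f c a w hp1]
  congr 1
  rw [Finset.prod_ite, Finset.prod_const, Finset.prod_const_one, mul_one]

theorem comm_expand {p : ℕ} (hp1 : 1 ≤ p) (a v : FA k) :
    npow' a p * v - v * npow' a p
      = ∑ i : Fin p, lprod (List.ofFn fun j => if j = i then a * v - v * a else a) := by
  apply Unitization.inr_injective (R := k)
  show ιFA k _ = ιFA k _
  rw [map_sub, map_mul, map_mul, ι_npow' _ _ hp1, map_sum, ← telescope p (ιFA k a) (ιFA k v)]
  refine Finset.sum_congr rfl fun i _ => ?_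
  rw [ι_lprod_ofFn hp1]
  exact congrArg List.prod (congrArg List.ofFn (funext fun j => by split_ifs <;> simp))

end Transfer

section Subst
variable {k : Type*} [Field k]

noncomputable def substHom (b : ℕ → FA k) : FA k →ₙₐ[k] FA k :=
  MonoidAlgebra.liftMagma k (FreeSemigroup.lift b)

theorem substHom_Xg (b : ℕ → FA k) (i : ℕ) : substHom b (Xg k i) = b i := by
  unfold substHom Xg
  rw [MonoidAlgebra.liftMagma_apply_apply]
  simp

theorem TSpan_subst {S : Set (FA k)} (φ : FA k →ₙₐ[k] FA k) {v : FA k} (hv : v ∈ TSpan k S) :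
    φ v ∈ TSpan k S := by
  induction hv using Submodule.span_induction with
  | mem a ha =>
    obtain ⟨ψ, s, hs, rfl⟩ := ha
    exact Submodule.subset_span ⟨φ.comp ψ, s, hs, rfl⟩
  | zero => simpa using (TSpan k S).zero_mem
  | add x y _ _ hx hy => rw [map_add]; exact (TSpan k S).add_mem hx hy
  | smul c x _ hx => rw [map_smul]; exact (TSpan k S).smul_mem c hx

theorem subset_TSpan {S : Set (FA k)} {s : FA k} (hs : s ∈ S) : s ∈ TSpan k S :=
  Submodule.subset_span ⟨NonUnitalAlgHom.id k (FA k), s, hs, rfl⟩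

theorem Hn_one (p : ℕ) : Hn k p 1 = TSpan k {npow' (Xg k 0) p} := by rw [Hn]

theorem Hn_succ (p n : ℕ) :
    Hn k p (n+2) = TSpan k (mulSet (Hn k p (n+1)) (Hn k p 1)) := by conv_lhs => rw [Hn]

theorem Hn_subst (p m : ℕ) (φ : FA k →ₙₐ[k] FA k) {u : FA k} (hu : u ∈ Hn k p m) :
    φ u ∈ Hn k p m := by
  match m with
  | 0 =>
    simp only [Hn, Submodule.mem_bot] at hu ⊢
    simp [hu]
  | 1 =>
    rw [Hn_one] at hu ⊢
    exact TSpan_subst φ hu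
  | (n+2) =>
    rw [Hn_succ] at hu ⊢
    exact TSpan_subst φ hu

theorem npow'_mem (p : ℕ) (b : FA k) : npow' b p ∈ Hn k p 1 := by
  rw [Hn_one]
  refine Submodule.subset_span ⟨substHom (fun _ => b), npow' (Xg k 0) p, rfl, ?_⟩
  rw [map_npow', substHom_Xg]

end Subst

section Main
variable {k : Type*} [Field k] {p : ℕ}

theorem units_sum_pow [Fact p.Prime] [CharP k p] (j : ℕ) :
    (∑ t : (ZMod p)ˣ, (ZMod.castHom dvd_rfl k ((t : ZMod p))) ^ j)
      = if (p - 1) ∣ j then (-1 : k) else 0 := by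
  classical
  have h1 : (∑ t : (ZMod p)ˣ, (ZMod.castHom dvd_rfl k ((t : ZMod p))) ^ j)
      = ZMod.castHom dvd_rfl k (∑ t : (ZMod p)ˣ, ((t : ZMod p)) ^ j) := by
    rw [map_sum]
    exact Finset.sum_congr rfl fun t _ => (map_pow _ _ _).symm
  rw [h1, FiniteField.sum_pow_units, ZMod.card]
  split_ifs
  · rw [map_neg, map_one]
  · rw [map_zero]

theorem c1_mem (hp : p.Prime) [CharP k p] (a w : FA k) :
    (∑ i : Fin p, lprod (List.ofFn fun j : Fin p => if j = i then w else a)) ∈ Hn k p 1 := by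
  classical
  haveI := Fact.mk hp
  have hp1 : 1 ≤ p := hp.one_lt.le
  have hp2 : 2 ≤ p := hp.two_le
  -- abbreviations (as plain functions, not `set`, to keep matching syntactic)
  have hwtle : ∀ f : Fin p → Bool, (Finset.univ.filter fun i => f i = true).card ≤ p := by
    intro f
    exact le_trans (Finset.card_filter_le _ _) (by simp)
  have hwt0 : ∀ f : Fin p → Bool,
      (Finset.univ.filter fun i => f i = true).card = 0 → f = fun _ => false := by
    intro f hf
    funext j
    rw [Finset.card_eq_zero] at hf
    by_contra hj
    have hj' : f j = true := by revert hj; cases f j <;> simp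
    have : j ∈ (Finset.univ.filter fun i => f i = true) := by simp [hj']
    rw [hf] at this
    simp at this
  have hwtp : ∀ f : Fin p → Bool,
      (Finset.univ.filter fun i => f i = true).card = p → f = fun _ => true := by
    intro f hf
    funext j
    have : (Finset.univ.filter fun i => f i = true) = Finset.univ := by
      apply Finset.eq_univ_of_card
      rw [hf]; simp
    have hj : j ∈ (Finset.univ.filter fun i => f i = true) := by
      rw [this]; exact Finset.mem_univ j
    simpa using hj
  -- Step 1: the weighted sum lies in H1
  have hT : (∑ f : Fin p → Bool,
      (if (p - 1) ∣ (p - 2 + (Finset.univ.filter fun i => f i = true).card) then (-1:k) else 0) •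
        lprod (List.ofFn fun i => cond (f i) w a)) ∈ Hn k p 1 := by
    have hexp : ∀ c : k, npow' (a + c • w) p
        = ∑ f : Fin p → Bool,
            c ^ (Finset.univ.filter fun i => f i = true).card •
              lprod (List.ofFn fun i => cond (f i) w a) := by
      intro c
      rw [npow'_expand hp1]
      exact Finset.sum_congr rfl fun f _ => lprod_smul_expand hp1 f c a w
    have heq : (∑ f : Fin p → Bool,
        (if (p - 1) ∣ (p - 2 + (Finset.univ.filter fun i => f i = true).card) then (-1:k) else 0) •
          lprod (List.ofFn fun i => cond (f i) w a))
        = ∑ t : (ZMod p)ˣ,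
            (ZMod.castHom dvd_rfl k ((t : ZMod p))) ^ (p - 2) •
              npow' (a + (ZMod.castHom dvd_rfl k ((t : ZMod p))) • w) p := by
      calc (∑ f : Fin p → Bool,
          (if (p - 1) ∣ (p - 2 + (Finset.univ.filter fun i => f i = true).card) then (-1:k) else 0) •
            lprod (List.ofFn fun i => cond (f i) w a))
          = ∑ f : Fin p → Bool,
              (∑ t : (ZMod p)ˣ, (ZMod.castHom dvd_rfl k ((t : ZMod p)))
                ^ (p - 2 + (Finset.univ.filter fun i => f i = true).card)) •
                lprod (List.ofFn fun i => cond (f i) w a) := by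
            refine Finset.sum_congr rfl fun f _ => ?_
            rw [units_sum_pow]
        _ = ∑ f : Fin p → Bool, ∑ t : (ZMod p)ˣ,
              (ZMod.castHom dvd_rfl k ((t : ZMod p))) ^ (p - 2) •
                (ZMod.castHom dvd_rfl k ((t : ZMod p)))
                  ^ (Finset.univ.filter fun i => f i = true).card •
                  lprod (List.ofFn fun i => cond (f i) w a) := by
            refine Finset.sum_congr rfl fun f _ => ?_
            rw [Finset.sum_smul]
            exact Finset.sum_congr rfl fun t _ => by rw [pow_add, mul_smul]
        _ = ∑ t : (ZMod p)ˣ, ∑ f : Fin p → Bool,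
              (ZMod.castHom dvd_rfl k ((t : ZMod p))) ^ (p - 2) •
                (ZMod.castHom dvd_rfl k ((t : ZMod p)))
                  ^ (Finset.univ.filter fun i => f i = true).card •
                  lprod (List.ofFn fun i => cond (f i) w a) := Finset.sum_comm
        _ = ∑ t : (ZMod p)ˣ,
              (ZMod.castHom dvd_rfl k ((t : ZMod p))) ^ (p - 2) •
                npow' (a + (ZMod.castHom dvd_rfl k ((t : ZMod p))) • w) p := by
            refine Finset.sum_congr rfl fun t _ => ?_
            rw [hexp, Finset.smul_sum]
    rw [heq]
    exact Submodule.sum_mem _ fun t _ => Submodule.smul_mem _ _ (npow'_mem p _)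
  -- Step 2: pointwise identification of the summands
  have hcFcT : (fun _ : Fin p => false) ≠ (fun _ : Fin p => true) := by
    intro h
    have := congrFun h ⟨0, by omega⟩
    simp at this
  have hper : ∀ f : Fin p → Bool,
      (if (p - 1) ∣ (p - 2 + (Finset.univ.filter fun i => f i = true).card) then (-1:k) else 0) •
        lprod (List.ofFn fun i => cond (f i) w a)
      = (if (Finset.univ.filter fun i => f i = true).card = 1 then
            (-1:k) • lprod (List.ofFn fun i => cond (f i) w a) else 0)
        + (if f = (fun _ => false) then
            (if (p - 1) ∣ (p - 2) then (-1:k) else 0) • lprod (List.ofFn fun i => cond (f i) w a)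
            else 0)
        + (if f = (fun _ => true) then
            (if (p - 1) ∣ (p - 2 + p) then (-1:k) else 0) •
              lprod (List.ofFn fun i => cond (f i) w a)
            else 0) := by
    intro f
    by_cases h0 : f = (fun _ => false)
    · subst h0
      have hw : (Finset.univ.filter fun i => (fun _ : Fin p => false) i = true).card = 0 := by
        simp
      rw [hw, Nat.add_zero, if_neg (by omega : ¬(0:ℕ) = 1), if_pos rfl, if_neg hcFcT,
        add_zero, zero_add]
    · by_cases h1 : f = (fun _ => true)
      · subst h1
        have hw : (Finset.univ.filter fun i => (fun _ : Fin p => true) i = true).card = p := by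
          simp
        rw [hw, if_neg (by omega : ¬p = 1), if_neg (Ne.symm hcFcT), zero_add, zero_add,
          if_pos rfl]
      · rw [if_neg h0, if_neg h1, add_zero, add_zero]
        have hn0 : (Finset.univ.filter fun i => f i = true).card ≠ 0 := fun h => h0 (hwt0 f h)
        have hnp : (Finset.univ.filter fun i => f i = true).card ≠ p := fun h => h1 (hwtp f h)
        by_cases hw1 : (Finset.univ.filter fun i => f i = true).card = 1
        · have h21 : p - 2 + 1 = p - 1 := by omega
          rw [hw1, h21, if_pos rfl, if_pos dvd_rfl]
        · have hle := hwtle f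
          have hnd : ¬ (p - 1) ∣ (p - 2 + (Finset.univ.filter fun i => f i = true).card) := by
            intro hdvd
            obtain ⟨c, hc⟩ := hdvd
            rcases le_or_gt c 1 with hc1 | hc1
            · have := Nat.mul_le_mul_left (p - 1) hc1
              omega
            · have := Nat.mul_le_mul_left (p - 1) hc1
              omega
          simp [hnd, hw1, h0, h1]
  -- Step 3: sum up the pointwise identity
  have hQcF : lprod (List.ofFn fun i : Fin p => cond ((fun _ : Fin p => false) i) w a)
      = npow' a p := by
    simp only [Bool.cond_false, List.ofFn_const, npow']
  have hQcT : lprod (List.ofFn fun i : Fin p => cond ((fun _ : Fin p => true) i) w a)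
      = npow' w p := by
    simp only [Bool.cond_true, List.ofFn_const, npow']
  have hone : (∑ f : Fin p → Bool,
      if (Finset.univ.filter fun i => f i = true).card = 1 then
        (-1:k) • lprod (List.ofFn fun i => cond (f i) w a) else 0)
      = (-1:k) • ∑ i : Fin p, lprod (List.ofFn fun j : Fin p => if j = i then w else a) := by
    rw [Finset.smul_sum, Finset.sum_ite, Finset.sum_const_zero, add_zero]
    symm
    refine Finset.sum_bij (fun (i : Fin p) _ => (fun j : Fin p => decide (j = i))) ?_ ?_ ?_ ?_
    · intro i _
      rw [Finset.mem_filter]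
      refine ⟨Finset.mem_univ _, ?_⟩
      have : (Finset.univ.filter fun j : Fin p => decide (j = i) = true) = {i} := by
        ext j; simp
      rw [this, Finset.card_singleton]
    · intro i _ i' _ h
      have := congrFun h i
      simpa using this.symm
    · intro f hf
      rw [Finset.mem_filter] at hf
      obtain ⟨i, hi⟩ := Finset.card_eq_one.mp hf.2
      refine ⟨i, Finset.mem_univ i, ?_⟩
      funext j
      have hmem : f j = true ↔ j = i := by
        rw [show (f j = true) ↔ j ∈ (Finset.univ.filter fun i => f i = true) by simp, hi,
          Finset.mem_singleton]
      by_cases hj : j = i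
      · subst hj
        simp [hmem.mpr rfl]
      · have hfalse : f j = false := by
          cases hfj : f j
          · rfl
          · exact absurd (hmem.mp hfj) hj
        simp [hj, hfalse]
    · intro i _
      have : (fun j : Fin p => cond (decide (j = i)) w a)
          = fun j : Fin p => if j = i then w else a :=
        funext fun j => Bool.cond_decide _ _ _
      rw [this]
  -- Step 4: assemble
  have hsplit : (∑ f : Fin p → Bool,
      (if (p - 1) ∣ (p - 2 + (Finset.univ.filter fun i => f i = true).card) then (-1:k) else 0) •
        lprod (List.ofFn fun i => cond (f i) w a))
      = (-1:k) • (∑ i : Fin p, lprod (List.ofFn fun j : Fin p => if j = i then w else a))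
        + (if (p - 1) ∣ (p - 2) then (-1:k) else 0) • npow' a p
        + (if (p - 1) ∣ (p - 2 + p) then (-1:k) else 0) • npow' w p := by
    rw [Finset.sum_congr rfl fun f _ => hper f, Finset.sum_add_distrib, Finset.sum_add_distrib,
      hone, Finset.sum_ite_eq' Finset.univ (fun _ : Fin p => false)
        (fun f => (if (p - 1) ∣ (p - 2) then (-1:k) else 0) •
          lprod (List.ofFn fun i => cond (f i) w a)),
      Finset.sum_ite_eq' Finset.univ (fun _ : Fin p => true)
        (fun f => (if (p - 1) ∣ (p - 2 + p) then (-1:k) else 0) •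
          lprod (List.ofFn fun i => cond (f i) w a)),
      if_pos (Finset.mem_univ _), if_pos (Finset.mem_univ _), hQcF, hQcT]
  have hS : ((-1:k) •
      ∑ i : Fin p, lprod (List.ofFn fun j : Fin p => if j = i then w else a)) ∈ Hn k p 1 := by
    have h1 : ((-1:k) •
        ∑ i : Fin p, lprod (List.ofFn fun j : Fin p => if j = i then w else a))
        = (∑ f : Fin p → Bool,
            (if (p - 1) ∣ (p - 2 + (Finset.univ.filter fun i => f i = true).card)
              then (-1:k) else 0) • lprod (List.ofFn fun i => cond (f i) w a))
          - ((if (p - 1) ∣ (p - 2) then (-1:k) else 0) • npow' a p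
            + (if (p - 1) ∣ (p - 2 + p) then (-1:k) else 0) • npow' w p) := by
      rw [hsplit]; abel
    rw [h1]
    exact Submodule.sub_mem _ hT (Submodule.add_mem _
      (Submodule.smul_mem _ _ (npow'_mem p a)) (Submodule.smul_mem _ _ (npow'_mem p w)))
  have h2 : (∑ i : Fin p, lprod (List.ofFn fun j : Fin p => if j = i then w else a))
      = (-1:k) • ((-1:k) •
          ∑ i : Fin p, lprod (List.ofFn fun j : Fin p => if j = i then w else a)) := by
    rw [smul_smul]; norm_num
  rw [h2]
  exact Submodule.smul_mem _ _ hS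

end Main

section Final
variable {k : Type*} [Field k] {p : ℕ}

theorem H1_comm (hp : p.Prime) [CharP k p] :
    ∀ u ∈ Hn k p 1, ∀ v : FA k, u * v - v * u ∈ Hn k p 1 := by
  intro u hu v
  rw [Hn_one] at hu
  induction hu using Submodule.span_induction with
  | mem x hx =>
    obtain ⟨φ, s, hs, rfl⟩ := hx
    rw [Set.mem_singleton_iff] at hs
    subst hs
    rw [map_npow', comm_expand hp.one_lt.le (φ (Xg k 0)) v]
    exact c1_mem hp (φ (Xg k 0)) (φ (Xg k 0) * v - v * φ (Xg k 0))
  | zero => simpa using (Hn k p 1).zero_mem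
  | add x y _ _ hx hy =>
    have h : (x + y) * v - v * (x + y) = (x * v - v * x) + (y * v - v * y) := by noncomm_ring
    rw [h]
    exact Submodule.add_mem _ hx hy
  | smul c x _ hx =>
    have h : (c • x) * v - v * (c • x) = c • (x * v - v * x) := by
      rw [smul_mul_assoc, mul_smul_comm, smul_sub]
    rw [h]
    exact Submodule.smul_mem _ c hx

end Final

theorem Hm_closed_under_commutator' (k : Type*) [Field k] (p : ℕ) (hp : p.Prime)
    [CharP k p] :
    ∀ m : ℕ, 1 ≤ m → ∀ u ∈ Hn k p m, ∀ v : FA k, u * v - v * u ∈ Hn k p m := by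
  intro m hm
  induction m, hm using Nat.le_induction with
  | base => exact H1_comm hp
  | succ n hn ih =>
    obtain ⟨n', rfl⟩ : ∃ n', n = n' + 1 := ⟨n - 1, by omega⟩
    intro u hu v
    rw [Hn_succ] at hu ⊢
    induction hu using Submodule.span_induction with
    | mem x hx =>
      obtain ⟨φ, s, hs, rfl⟩ := hx
      obtain ⟨u1, hu1, u2, hu2, rfl⟩ := hs
      rw [map_mul]
      have h1 : φ u1 ∈ Hn k p (n' + 1) := Hn_subst p _ φ hu1
      have h2 : φ u2 ∈ Hn k p 1 := Hn_subst p _ φ hu2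
      have hc1 : φ u1 * v - v * φ u1 ∈ Hn k p (n' + 1) := ih _ h1 v
      have hc2 : φ u2 * v - v * φ u2 ∈ Hn k p 1 := H1_comm hp _ h2 v
      have key : φ u1 * φ u2 * v - v * (φ u1 * φ u2)
          = (φ u1 * v - v * φ u1) * φ u2 + φ u1 * (φ u2 * v - v * φ u2) := by noncomm_ring
      rw [key]
      refine Submodule.add_mem _ ?_ ?_
      · exact subset_TSpan ⟨_, hc1, _, h2, rfl⟩
      · exact subset_TSpan ⟨_, h1, _, hc2, rfl⟩
    | zero => simpa using Submodule.zero_mem _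
    | add x y _ _ hx hy =>
      have h : (x + y) * v - v * (x + y) = (x * v - v * x) + (y * v - v * y) := by noncomm_ring
      rw [h]
      exact Submodule.add_mem _ hx hy
    | smul c x _ hx =>
      have h : (c • x) * v - v * (c • x) = c • (x * v - v * x) := by
        rw [smul_mul_assoc, mul_smul_comm, smul_sub]
      rw [h]
      exact Submodule.smul_mem _ c hx

/-- Each T-space `H_m` is closed under commutators with arbitrary elements. -/
theorem Hm_closed_under_commutator (k : Type*) [Field k] (p : ℕ) (hp : p.Prime)
    [CharP k p] :
    ∀ m : ℕ, 1 ≤ m → ∀ u ∈ Hn k p m, ∀ v : FA k, u * v - v * u ∈ Hn k p m :=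
  Hm_closed_under_commutator' k p hp
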